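/- Let n₁ be a natural number. If the polynomial (1 − t)^{n₁} (1 − t²)(1 − t³) has exactly n₁ + 3 nonzero coefficients, then n₁ = 5 (equivalently, its degree n = n₁ + 5 equals 10). -/

import Mathlib

open Polynomial Finset

private lemma chooseW {n k : ℕ} (h : 2*k+1 ≤ n) : n.choose k ≤ n.choose (k+1) := by
  have h1 := Nat.choose_succ_right_eq n k
  have h2 : 1 ≤ n.choose k := Nat.choose_pos (by omega)
  have h3 : k + 1 ≤ n - k := by omega
  nlinarith [Nat.choose_pos (show k ≤ n by omega)]

private lemma chooseS {n k : ℕ} (h : 2*k+2 ≤ n) : n.choose k < n.choose (k+1) := by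
  have h1 := Nat.choose_succ_right_eq n k
  have h2 : 1 ≤ n.choose k := Nat.choose_pos (by omega)
  have h3 : k + 2 ≤ n - k := by omega
  nlinarith

/-- Core binomial inequality on the lower half. -/
private lemma core {n k : ℕ} (h8 : 8 ≤ n) (h5 : 5 ≤ k) (hk : 2*k ≤ n+3) :
    n.choose (k-2) + n.choose (k-5) < n.choose k + n.choose (k-3) := by
  obtain ⟨m, rfl⟩ : ∃ m, k = m + 5 := ⟨k - 5, by omega⟩
  simp only [show m+5-2 = m+3 from rfl, show m+5-3 = m+2 from rfl, show m+5-5 = m from rfl]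
  rcases (by omega : 2*(m+5) ≤ n+1 ∨ 2*(m+5) = n+2 ∨ 2*(m+5) = n+3) with hc | hc | hc
  · have a1 : n.choose (m+3) < n.choose (m+4) := chooseS (by omega)
    have a2 : n.choose (m+4) ≤ n.choose (m+5) := chooseW (by omega)
    have a3 : n.choose m ≤ n.choose (m+1) := chooseW (by omega)
    have a4 : n.choose (m+1) ≤ n.choose (m+2) := chooseW (by omega)
    omega
  · have a1 : n.choose (m+5) = n.choose (m+3) := by
      rw [← Nat.choose_symm (by omega : m+5 ≤ n)]
      congr 1; omega
    have a2 : n.choose m < n.choose (m+1) := chooseS (by omega)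
    have a3 : n.choose (m+1) ≤ n.choose (m+2) := chooseW (by omega)
    omega
  · have hn : n = 2*m+7 := by omega
    subst hn
    have a1 : (2*m+7).choose (m+5) = (2*m+7).choose (m+2) := by
      rw [← Nat.choose_symm (by omega : m+5 ≤ 2*m+7)]
      congr 1; omega
    rw [a1]
    have i1 : (2*m+7).choose (m+3) * (m+3) = (2*m+7).choose (m+2) * (m+5) := by
      have := Nat.choose_succ_right_eq (2*m+7) (m+2)
      convert this using 2 <;> omega
    have i2 : (2*m+7).choose (m+2) * (m+2) = (2*m+7).choose (m+1) * (m+6) := by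
      have := Nat.choose_succ_right_eq (2*m+7) (m+1)
      convert this using 2 <;> omega
    have i3 : (2*m+7).choose (m+1) * (m+1) = (2*m+7).choose m * (m+7) := by
      have := Nat.choose_succ_right_eq (2*m+7) m
      convert this using 2 <;> omega
    have hp : 1 ≤ (2*m+7).choose (m+2) := Nat.choose_pos (by omega)
    zify at i1 i2 i3 hp ⊢
    set a : ℤ := ((2*m+7).choose (m+2) : ℤ)
    set b : ℤ := ((2*m+7).choose (m+3) : ℤ)
    set c : ℤ := ((2*m+7).choose (m+1) : ℤ)
    set d : ℤ := ((2*m+7).choose m : ℤ)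
    set M : ℤ := (m : ℤ)
    have key : (b + d) * ((M+3)*(M+6)*(M+7))
        = a * ((M+5)*(M+6)*(M+7) + (M+1)*(M+2)*(M+3)) := by
      linear_combination ((M+6)*(M+7))*i1 - ((M+3)*(M+1))*i2 - ((M+3)*(M+6))*i3
    have hM : (0:ℤ) ≤ M := Int.natCast_nonneg m
    have hP : (0:ℤ) < (M+3)*(M+6)*(M+7) := by positivity
    have hQ : (M+5)*(M+6)*(M+7) + (M+1)*(M+2)*(M+3) < 2*((M+3)*(M+6)*(M+7)) := by nlinarith
    have hlt : (b+d)*((M+3)*(M+6)*(M+7)) < (a+a)*((M+3)*(M+6)*(M+7)) := by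
      rw [key]
      calc a * ((M+5)*(M+6)*(M+7) + (M+1)*(M+2)*(M+3))
          < a * (2*((M+3)*(M+6)*(M+7))) := mul_lt_mul_of_pos_left hQ (by linarith)
        _ = (a+a)*((M+3)*(M+6)*(M+7)) := by ring
    exact lt_of_mul_lt_mul_right hlt (le_of_lt hP)

private lemma coeff_one_sub_X_pow (n k : ℕ) :
    (((1:ℚ[X]) - X)^n).coeff k = (-1:ℚ)^k * n.choose k := by
  have h : ((1:ℚ[X]) - X)^n = ∑ i ∈ range (n+1), C ((-1:ℚ)^i * n.choose i) * X^i := by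
    rw [sub_eq_add_neg, add_comm, add_pow]
    refine Finset.sum_congr rfl fun i hi => ?_
    rw [neg_pow]
    simp [C_mul]
    ring
  rw [h, finset_sum_coeff]
  simp only [coeff_C_mul, coeff_X_pow, mul_ite, mul_one, mul_zero]
  rw [Finset.sum_ite_eq (range (n+1)) k]
  by_cases hk : k ∈ range (n+1)
  · simp [hk]
  · simp [hk]
    exact Nat.choose_eq_zero_of_lt (by simpa using hk)

private lemma coeff_prod (n k : ℕ) :
    (((1 - X) ^ n * (1 - X ^ 2) * (1 - X ^ 3) : Polynomial ℚ)).coeff k =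
      (-1:ℚ)^k * n.choose k
      - (if 2 ≤ k then (-1:ℚ)^(k-2) * n.choose (k-2) else 0)
      - (if 3 ≤ k then (-1:ℚ)^(k-3) * n.choose (k-3) else 0)
      + (if 5 ≤ k then (-1:ℚ)^(k-5) * n.choose (k-5) else 0) := by
  have hp : ((1 - X) ^ n * (1 - X ^ 2) * (1 - X ^ 3) : Polynomial ℚ)
      = (1-X)^n - (1-X)^n * X^2 - (1-X)^n * X^3 + (1-X)^n * X^5 := by ring
  rw [hp, coeff_add, coeff_sub, coeff_sub, coeff_mul_X_pow', coeff_mul_X_pow',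
    coeff_mul_X_pow', coeff_one_sub_X_pow]
  congr 1
  · congr 1
    · congr 1
      split <;> simp [coeff_one_sub_X_pow]
    · split <;> simp [coeff_one_sub_X_pow]
  · split <;> simp [coeff_one_sub_X_pow]

/-- The signless integer coefficient. -/
private def zfun (n k : ℕ) : ℤ :=
  (n.choose k : ℤ) - (if 2 ≤ k then (n.choose (k-2) : ℤ) else 0)
  + (if 3 ≤ k then (n.choose (k-3) : ℤ) else 0) - (if 5 ≤ k then (n.choose (k-5) : ℤ) else 0)

private lemma coeff_eq_zfun (n k : ℕ) :
    (((1 - X) ^ n * (1 - X ^ 2) * (1 - X ^ 3) : Polynomial ℚ)).coeff k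
      = (-1:ℚ)^k * ((zfun n k : ℤ) : ℚ) := by
  rw [coeff_prod, zfun]
  by_cases h5 : 5 ≤ k
  · obtain ⟨j, rfl⟩ : ∃ j, k = j + 5 := ⟨k - 5, by omega⟩
    simp only [if_pos (show 2 ≤ j+5 by omega), if_pos (show 3 ≤ j+5 by omega),
      if_pos (show 5 ≤ j+5 by omega),
      show j+5-2 = j+3 from rfl, show j+5-3 = j+2 from rfl, show j+5-5 = j from rfl]
    push_cast
    rw [show j+5 = (j+3)+2 by ring, show j+3 = (j+2)+1 by ring, show j+2 = j+1+1 by ring]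
    rw [pow_add, pow_add, pow_add, pow_add]
    ring
  · interval_cases k <;> norm_num <;> ring
private lemma mem_support_of {n k : ℕ} (h : zfun n k ≠ 0) :
    k ∈ (((1 - X) ^ n * (1 - X ^ 2) * (1 - X ^ 3) : Polynomial ℚ)).support := by
  rw [mem_support_iff, coeff_eq_zfun]
  intro hc
  rcases mul_eq_zero.mp hc with h1 | h1
  · exact absurd h1 (pow_ne_zero _ (by norm_num))
  · exact h (by exact_mod_cast h1)

private lemma zfun_ne {n k : ℕ} (h8 : 8 ≤ n) (hk : k ≤ n+5)
    (hs : 2*k ≤ n+3 ∨ n+7 ≤ 2*k) : zfun n k ≠ 0 := by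
  by_cases h5 : 5 ≤ k
  · -- full formula
    have hz : zfun n k = (n.choose k : ℤ) - n.choose (k-2) + n.choose (k-3) - n.choose (k-5) := by
      rw [zfun, if_pos (by omega), if_pos (by omega), if_pos (by omega)]
    rcases hs with hs | hs
    · have := core h8 h5 hs
      rw [hz]; push_cast; omega
    · by_cases hkn : k ≤ n
      · -- reflect
        have ha : n.choose k = n.choose (n+5-k-5) := by
          rw [← Nat.choose_symm hkn]; congr 1; omega
        have hb : n.choose (k-2) = n.choose (n+5-k-3) := by
          rw [← Nat.choose_symm (show k-2 ≤ n by omega)]; congr 1; omega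
        have hc : n.choose (k-3) = n.choose (n+5-k-2) := by
          rw [← Nat.choose_symm (show k-3 ≤ n by omega)]; congr 1; omega
        have hd : n.choose (k-5) = n.choose (n+5-k) := by
          rw [← Nat.choose_symm (show k-5 ≤ n by omega)]; congr 1; omega
        have hcore := core h8 (show 5 ≤ n+5-k by omega) (show 2*(n+5-k) ≤ n+3 by omega)
        rw [hz, ha, hb, hc, hd]
        push_cast
        omega
      · -- k between n+1 and n+5
        have c1 : n.choose (n+1) = 0 := Nat.choose_eq_zero_of_lt (by omega)
        have c2 : n.choose (n+2) = 0 := Nat.choose_eq_zero_of_lt (by omega)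
        have c3 : n.choose (n+3) = 0 := Nat.choose_eq_zero_of_lt (by omega)
        have c4 : n.choose (n+4) = 0 := Nat.choose_eq_zero_of_lt (by omega)
        have c5 : n.choose (n+5) = 0 := Nat.choose_eq_zero_of_lt (by omega)
        have s1 : n.choose (n-1) = n := by
          rw [Nat.choose_symm (show 1 ≤ n by omega), Nat.choose_one_right]
        have s2 : n.choose (n-2) = n.choose 2 := Nat.choose_symm (by omega)
        have s3 : n.choose (n-3) = n.choose 3 := Nat.choose_symm (by omega)
        have s4 : n.choose (n-4) = n.choose 4 := Nat.choose_symm (by omega)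
        have m1 : n.choose 1 < n.choose 2 := chooseS (by omega)
        have m2 : n.choose 2 < n.choose 3 := chooseS (by omega)
        have m3 : n.choose 3 < n.choose 4 := chooseS (by omega)
        have m0 : n.choose 0 < n.choose 1 := chooseS (by omega)
        have hn1 : n.choose 1 = n := Nat.choose_one_right n
        have hn0 : n.choose 0 = 1 := Nat.choose_zero_right n
        rw [hz]
        rcases (by omega : k = n+1 ∨ k = n+2 ∨ k = n+3 ∨ k = n+4 ∨ k = n+5) with rfl|rfl|rfl|rfl|rfl
        · rw [c1, show n+1-2 = n-1 by omega, show n+1-3 = n-2 by omega,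
            show n+1-5 = n-4 by omega, s1, s2, s4]
          first | (push_cast; omega) | push_cast
        · rw [c2, show n+2-2 = n by omega, show n+2-3 = n-1 by omega,
            show n+2-5 = n-3 by omega, Nat.choose_self, s1, s3]
          first | (push_cast; omega) | push_cast
        · rw [c3, show n+3-2 = n+1 by omega, show n+3-3 = n by omega,
            show n+3-5 = n-2 by omega, c1, Nat.choose_self, s2]
          first | (push_cast; omega) | push_cast
        · rw [c4, show n+4-2 = n+2 by omega, show n+4-3 = n+1 by omega,
            show n+4-5 = n-1 by omega, c1, c2, s1]
          first | (push_cast; omega) | push_cast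
        · rw [c5, show n+5-2 = n+3 by omega, show n+5-3 = n+2 by omega,
            show n+5-5 = n by omega, c2, c3, Nat.choose_self]
          first | (push_cast; omega) | push_cast
  · -- k ≤ 4
    have m0 : n.choose 0 < n.choose 1 := chooseS (by omega)
    have m1 : n.choose 1 < n.choose 2 := chooseS (by omega)
    have m2 : n.choose 2 < n.choose 3 := chooseS (by omega)
    have m3 : n.choose 3 < n.choose 4 := chooseS (by omega)
    have hn0 : n.choose 0 = 1 := Nat.choose_zero_right n
    have hn1 : n.choose 1 = n := Nat.choose_one_right n
    rw [hn1] at m0 m1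
    rw [hn0] at m0
    interval_cases k <;> simp [zfun] <;> push_cast <;> omega

/-- If the polynomial `(1 − t)^{n₁} (1 − t²)(1 − t³)` has exactly `n₁ + 3` nonzero
coefficients, then `n₁ = 5` (equivalently, its degree `n = n₁ + 5` equals `10`). -/
theorem stmt7 (n₁ : ℕ)
    (h : (((1 - X) ^ n₁ * (1 - X ^ 2) * (1 - X ^ 3) : Polynomial ℚ)).support.card = n₁ + 3) :
    n₁ = 5 := by
  by_cases h8 : 8 ≤ n₁
  · exfalso
    have hcard : n₁ + 4 ≤
        (((1 - X) ^ n₁ * (1 - X ^ 2) * (1 - X ^ 3) : Polynomial ℚ)).support.card := by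
      have := Finset.card_le_card_of_injOn (f := fun i => if 2*i ≤ n₁+3 then i else i+2)
        (s := range (n₁+4))
        (t := (((1 - X) ^ n₁ * (1 - X ^ 2) * (1 - X ^ 3) : Polynomial ℚ)).support)
        (fun i hi => by
          simp only [Finset.coe_range, Set.mem_Iio] at hi
          show (if 2*i ≤ n₁+3 then i else i+2) ∈ _
          by_cases hc : 2*i ≤ n₁+3
          · rw [if_pos hc]
            exact mem_support_of (zfun_ne h8 (by omega) (Or.inl hc))
          · rw [if_neg hc]
            exact mem_support_of (zfun_ne h8 (by omega) (Or.inr (by omega))))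
        (fun i hi j hj hij => by
          simp only [Finset.coe_range, Set.mem_Iio] at hi hj
          simp only at hij
          split_ifs at hij <;> omega)
      simpa using this
    omega
  · interval_cases n₁
    · exfalso
      have hsub : ({0,2,3,5} : Finset ℕ) ⊆
          (((1 - X) ^ 0 * (1 - X ^ 2) * (1 - X ^ 3) : Polynomial ℚ)).support := by
        intro k hk
        fin_cases hk <;> exact mem_support_of (by decide)
      have := Finset.card_le_card hsub
      rw [h] at this
      revert this
      decide
    · exfalso
      have hsub : ({0,1,2,4,5} : Finset ℕ) ⊆
          (((1 - X) ^ 1 * (1 - X ^ 2) * (1 - X ^ 3) : Polynomial ℚ)).support := by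
        intro k hk
        fin_cases hk <;> exact mem_support_of (by decide)
      have := Finset.card_le_card hsub
      rw [h] at this
      revert this
      decide
    · exfalso
      have hsub : ({0,1,3,4,6,7} : Finset ℕ) ⊆
          (((1 - X) ^ 2 * (1 - X ^ 2) * (1 - X ^ 3) : Polynomial ℚ)).support := by
        intro k hk
        fin_cases hk <;> exact mem_support_of (by decide)
      have := Finset.card_le_card hsub
      rw [h] at this
      revert this
      decide
    · exfalso
      have hsub : ({0,1,2,3,5,6,7} : Finset ℕ) ⊆
          (((1 - X) ^ 3 * (1 - X ^ 2) * (1 - X ^ 3) : Polynomial ℚ)).support := by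
        intro k hk
        fin_cases hk <;> exact mem_support_of (by decide)
      have := Finset.card_le_card hsub
      rw [h] at this
      revert this
      decide
    · exfalso
      have hsub : ({0,1,2,3,4,5,6,7} : Finset ℕ) ⊆
          (((1 - X) ^ 4 * (1 - X ^ 2) * (1 - X ^ 3) : Polynomial ℚ)).support := by
        intro k hk
        fin_cases hk <;> exact mem_support_of (by decide)
      have := Finset.card_le_card hsub
      rw [h] at this
      revert this
      decide
    · rfl
    · exfalso
      have hsub : ({0,1,2,3,4,7,8,9,10,11} : Finset ℕ) ⊆
          (((1 - X) ^ 6 * (1 - X ^ 2) * (1 - X ^ 3) : Polynomial ℚ)).support := by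
        intro k hk
        fin_cases hk <;> exact mem_support_of (by decide)
      have := Finset.card_le_card hsub
      rw [h] at this
      revert this
      decide
    · exfalso
      have hsub : ({0,1,2,3,4,5,7,8,9,10,11} : Finset ℕ) ⊆
          (((1 - X) ^ 7 * (1 - X ^ 2) * (1 - X ^ 3) : Polynomial ℚ)).support := by
        intro k hk
        fin_cases hk <;> exact mem_support_of (by decide)
      have := Finset.card_le_card hsub
      rw [h] at this
      revert this
      decide
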